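/- Let x, y, w be n×n matrices over a field such that x−y, w−y and x−w are all invertible. Then (w−y)⁻¹ + (x−w)⁻¹ is invertible, and det((w−y)⁻¹ + (x−w)⁻¹) = det(x−y) / (det(w−y)·det(x−w)). -/

import Mathlib

open Matrix

theorem stmt_2 {n : ℕ} {𝕜 : Type*} [Field 𝕜]
    (x y w : Matrix (Fin n) (Fin n) 𝕜)
    (hxy : IsUnit (x - y).det) (hwy : IsUnit (w - y).det) (hxw : IsUnit (x - w).det) :
    IsUnit ((w - y)⁻¹ + (x - w)⁻¹).det ∧
      ((w - y)⁻¹ + (x - w)⁻¹).det = (x - y).det / ((w - y).det * (x - w).det) := by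
  have key : (w - y)⁻¹ + (x - w)⁻¹ = (w - y)⁻¹ * (x - y) * (x - w)⁻¹ := by
    have hxy' : x - y = (x - w) + (w - y) := by abel
    rw [hxy', mul_add, add_mul, Matrix.mul_nonsing_inv_cancel_right _ _ hxw,
      Matrix.nonsing_inv_mul _ hwy, one_mul]
  have hdet : ((w - y)⁻¹ + (x - w)⁻¹).det
      = (x - y).det / ((w - y).det * (x - w).det) := by
    rw [key, Matrix.det_mul, Matrix.det_mul, Matrix.det_nonsing_inv,
      Matrix.det_nonsing_inv]
    simp only [Ring.inverse_eq_inv']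
    field_simp
    try ring
  refine ⟨?_, hdet⟩
  rw [hdet]
  exact (hxy.div (hwy.mul hxw))
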